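/- Robust credible interval for translated triangular densities: for p_t(x) = max{0, 1−|x−t|}, t ∈ [−γ, γ], γ > 0, 1/2 ≤ α < 1, the minimal-length interval A (symmetric about 0) satisfying ∫_A p_t ≥ α for all t ∈ [−γ,γ] is [−1+√(1−α−γ²), 1−√(1−α−γ²)] if γ² ≤ (1−α)/2, and [−γ−1+√(2(1−α)), γ+1−√(2(1−α))] if γ² ≥ (1−α)/2; in both cases this interval is strictly shorter than the union ∪_t A_t^{min} = [−γ−1+√(1−α), γ+1−√(1−α)] for every γ > 0. -/

import Mathlib

open Set Filter

noncomputable def Gtri (x : ℝ) : ℝ :=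
  if x ≤ 0 then (max 0 (1+x))^2/2 else 1 - (max 0 (1-x))^2/2

lemma Gtri_eq1 {x : ℝ} (h : x ≤ -1) : Gtri x = 0 := by
  simp only [Gtri, if_pos (by linarith : x ≤ 0), max_eq_left (by linarith : 1 + x ≤ 0)]
  norm_num

lemma Gtri_eq2 {x : ℝ} (h1 : -1 ≤ x) (h2 : x ≤ 0) : Gtri x = (1+x)^2/2 := by
  simp only [Gtri, if_pos h2, max_eq_right (by linarith : (0:ℝ) ≤ 1 + x)]

lemma Gtri_eq3 {x : ℝ} (h1 : 0 ≤ x) (h2 : x ≤ 1) : Gtri x = 1 - (1-x)^2/2 := by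
  by_cases hx : x ≤ 0
  · have hx0 : x = 0 := le_antisymm hx h1
    subst hx0
    simp only [Gtri]
    norm_num
  · push_neg at hx
    simp only [Gtri, if_neg (not_le.mpr hx), max_eq_right (by linarith : (0:ℝ) ≤ 1 - x)]

lemma Gtri_eq4 {x : ℝ} (h : 1 ≤ x) : Gtri x = 1 := by
  simp only [Gtri, if_neg (by linarith : ¬ x ≤ 0), max_eq_left (by linarith : 1 - x ≤ 0)]
  norm_num

lemma Gtri_left {x : ℝ} (hx : x ≤ 0) : 2 * Gtri x = (max 0 (1+x))^2 := by
  simp only [Gtri, if_pos hx]; ring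

lemma Gtri_right {x : ℝ} (hx : 0 ≤ x) : 2 * (1 - Gtri x) = (max 0 (1-x))^2 := by
  rcases le_or_gt x 1 with h | h
  · rw [Gtri_eq3 hx h, max_eq_right (by linarith : (0:ℝ) ≤ 1 - x)]; ring
  · rw [Gtri_eq4 h.le, max_eq_left (by linarith : 1 - x ≤ 0)]; norm_num

lemma Gtri_nonneg (x : ℝ) : 0 ≤ Gtri x := by
  rcases le_or_gt x 0 with hx | hx
  · have h := Gtri_left hx
    nlinarith [sq_nonneg (max 0 (1+x))]
  · have h := Gtri_right hx.le
    have hm : max 0 (1-x) ≤ 1 := max_le one_pos.le (by linarith)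
    have hm0 : 0 ≤ max 0 (1-x) := le_max_left _ _
    nlinarith

lemma Gtri_le_one (x : ℝ) : Gtri x ≤ 1 := by
  rcases le_or_gt x 0 with hx | hx
  · have h := Gtri_left hx
    have hm : max 0 (1+x) ≤ 1 := max_le one_pos.le (by linarith)
    have hm0 : 0 ≤ max 0 (1+x) := le_max_left _ _
    nlinarith
  · have h := Gtri_right hx.le
    nlinarith [sq_nonneg (max 0 (1-x))]

lemma Gtri_half_le {x : ℝ} (h : Gtri x ≤ 1/2) : x ≤ 0 := by
  by_contra hc
  push_neg at hc
  have hr := Gtri_right hc.le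
  have hm : max 0 (1-x) < 1 := max_lt one_pos (by linarith)
  have hm0 : 0 ≤ max 0 (1-x) := le_max_left _ _
  nlinarith

lemma Gtri_le_half {x : ℝ} (h : 1/2 ≤ Gtri x) : 0 ≤ x := by
  by_contra hc
  push_neg at hc
  have hr := Gtri_left hc.le
  have hm : max 0 (1+x) < 1 := max_lt one_pos (by linarith)
  have hm0 : 0 ≤ max 0 (1+x) := le_max_left _ _
  nlinarith

lemma glue {g₁ g₂ f : ℝ → ℝ} {a d : ℝ} (h₁ : HasDerivAt g₁ d a) (h₂ : HasDerivAt g₂ d a)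
    (e₁ : ∀ᶠ y in nhdsWithin a (Set.Iic a), f y = g₁ y)
    (e₂ : ∀ᶠ y in nhdsWithin a (Set.Ici a), f y = g₂ y)
    (hfa₁ : f a = g₁ a) (hfa₂ : f a = g₂ a) : HasDerivAt f d a := by
  have l : HasDerivWithinAt f d (Set.Iic a) a :=
    (h₁.hasDerivWithinAt).congr_of_eventuallyEq e₁ hfa₁
  have r : HasDerivWithinAt f d (Set.Ici a) a :=
    (h₂.hasDerivWithinAt).congr_of_eventuallyEq e₂ hfa₂
  have h := l.union r
  rw [Set.Iic_union_Ici] at h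
  exact hasDerivWithinAt_univ.mp h

lemma hg2 (x : ℝ) : HasDerivAt (fun y : ℝ => (1+y)^2/2) (1+x) x := by
  have h : HasDerivAt (fun y : ℝ => 1 + y) 1 x := by
    simpa using (hasDerivAt_id x).const_add 1
  have : HasDerivAt (fun y : ℝ => (1+y)^2/2) _ x := (h.pow 2).div_const 2
  convert this using 1
  push_cast
  ring

lemma hg3 (x : ℝ) : HasDerivAt (fun y : ℝ => 1 - (1-y)^2/2) (1-x) x := by
  have h : HasDerivAt (fun y : ℝ => 1 - y) (-1) x := by
    simpa using (hasDerivAt_id x).const_sub 1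
  have : HasDerivAt (fun y : ℝ => 1 - (1-y)^2/2) _ x := ((h.pow 2).div_const 2).const_sub 1
  convert this using 1
  push_cast
  ring

lemma Gtri_deriv (x : ℝ) : HasDerivAt Gtri (max 0 (1 - |x|)) x := by
  rcases lt_trichotomy x (-1) with hx | hx | hx
  · have hmax : max 0 (1 - |x|) = 0 :=
      max_eq_left (by rw [abs_of_neg (by linarith : x < 0)]; linarith)
    rw [hmax]
    apply (hasDerivAt_const x (0:ℝ)).congr_of_eventuallyEq
    filter_upwards [Iio_mem_nhds hx] with y hy
    exact Gtri_eq1 (le_of_lt hy)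
  · subst hx
    have hmax : max 0 (1 - |(-1:ℝ)|) = 0 := by norm_num
    rw [hmax]
    apply glue (g₁ := fun _ => (0:ℝ)) (g₂ := fun y => (1+y)^2/2)
    · exact hasDerivAt_const _ _
    · simpa using hg2 (-1)
    · filter_upwards [self_mem_nhdsWithin] with y hy using Gtri_eq1 hy
    · have h1 : ∀ᶠ y in nhdsWithin (-1:ℝ) (Set.Ici (-1)), y < 0 :=
        eventually_nhdsWithin_of_eventually_nhds (eventually_lt_nhds (by norm_num))
      filter_upwards [self_mem_nhdsWithin, h1] with y hy1 hy2 using Gtri_eq2 hy1 hy2.le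
    · rw [Gtri_eq1 le_rfl]
    · rw [Gtri_eq1 le_rfl]; norm_num
  · rcases lt_trichotomy x 0 with hx0 | hx0 | hx0
    · have hmax : max 0 (1 - |x|) = 1 + x := by
        rw [abs_of_neg hx0, max_eq_right (by linarith : (0:ℝ) ≤ 1 - -x)]; ring
      rw [hmax]
      apply (hg2 x).congr_of_eventuallyEq
      filter_upwards [Ioo_mem_nhds hx hx0] with y hy using Gtri_eq2 hy.1.le hy.2.le
    · subst hx0
      have hmax : max 0 (1 - |(0:ℝ)|) = 1 := by norm_num
      rw [hmax]
      apply glue (g₁ := fun y => (1+y)^2/2) (g₂ := fun y => 1 - (1-y)^2/2)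
      · simpa using hg2 0
      · simpa using hg3 0
      · have h1 : ∀ᶠ y in nhdsWithin (0:ℝ) (Set.Iic 0), -1 < y :=
          eventually_nhdsWithin_of_eventually_nhds (eventually_gt_nhds (by norm_num))
        filter_upwards [self_mem_nhdsWithin, h1] with y hy1 hy2 using Gtri_eq2 hy2.le hy1
      · have h1 : ∀ᶠ y in nhdsWithin (0:ℝ) (Set.Ici 0), y < 1 :=
          eventually_nhdsWithin_of_eventually_nhds (eventually_lt_nhds (by norm_num))
        filter_upwards [self_mem_nhdsWithin, h1] with y hy1 hy2 using Gtri_eq3 hy1 hy2.le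
      · rw [Gtri_eq2 (by norm_num) le_rfl]
      · rw [Gtri_eq2 (by norm_num) le_rfl]; norm_num
    · rcases lt_trichotomy x 1 with hx1 | hx1 | hx1
      · have hmax : max 0 (1 - |x|) = 1 - x := by
          rw [abs_of_pos hx0, max_eq_right (by linarith : (0:ℝ) ≤ 1 - x)]
        rw [hmax]
        apply (hg3 x).congr_of_eventuallyEq
        filter_upwards [Ioo_mem_nhds hx0 hx1] with y hy using Gtri_eq3 hy.1.le hy.2.le
      · subst hx1
        have hmax : max 0 (1 - |(1:ℝ)|) = 0 := by norm_num
        rw [hmax]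
        apply glue (g₁ := fun y => 1 - (1-y)^2/2) (g₂ := fun _ => (1:ℝ))
        · simpa using hg3 1
        · exact hasDerivAt_const _ _
        · have h1 : ∀ᶠ y in nhdsWithin (1:ℝ) (Set.Iic 1), 0 < y :=
            eventually_nhdsWithin_of_eventually_nhds (eventually_gt_nhds (by norm_num))
          filter_upwards [self_mem_nhdsWithin, h1] with y hy1 hy2 using Gtri_eq3 hy2.le hy1
        · filter_upwards [self_mem_nhdsWithin] with y hy using Gtri_eq4 hy
        · rw [Gtri_eq4 le_rfl]; norm_num
        · rw [Gtri_eq4 le_rfl]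
      · have hmax : max 0 (1 - |x|) = 0 := by
          rw [abs_of_pos (by linarith)]; exact max_eq_left (by linarith)
        rw [hmax]
        apply (hasDerivAt_const x (1:ℝ)).congr_of_eventuallyEq
        filter_upwards [Ioi_mem_nhds hx1] with y hy using Gtri_eq4 hy.le

lemma Gtri_integral (t a b : ℝ) :
    (∫ x in a..b, max 0 (1 - |x - t|)) = Gtri (b - t) - Gtri (a - t) := by
  have hc : Continuous fun x : ℝ => max 0 (1 - |x - t|) :=
    continuous_const.max (continuous_const.sub ((continuous_id.sub continuous_const).abs))
  have key : ∀ x ∈ Set.uIcc a b, HasDerivAt (fun y => Gtri (y - t)) (max 0 (1 - |x - t|)) x := by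
    intro x _
    have h2 : HasDerivAt (fun y : ℝ => y - t) 1 x := (hasDerivAt_id x).sub_const t
    have h3 := (Gtri_deriv (x - t)).comp x h2
    rw [mul_one] at h3
    exact h3
  exact intervalIntegral.integral_eq_sub_of_hasDerivAt key (hc.intervalIntegrable a b)

set_option maxHeartbeats 2000000 in
theorem triangular_robust_credible_interval
    (γ α : ℝ) (hγ : 0 < γ) (hα : 1/2 ≤ α) (hα1 : α < 1)
    (p : ℝ → ℝ → ℝ) (hp : p = fun t x => max 0 (1 - |x - t|)) :
    (γ ^ 2 ≤ (1 - α) / 2 →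
      ∀ a b : ℝ, a = -1 + Real.sqrt (1 - α - γ ^ 2) → b = 1 - Real.sqrt (1 - α - γ ^ 2) →
        (∀ t ∈ Set.Icc (-γ) γ, α ≤ ∫ x in a..b, p t x) ∧
        (∀ a' b' : ℝ, a' ≤ b' → (∀ t ∈ Set.Icc (-γ) γ, α ≤ ∫ x in a'..b', p t x) →
          b - a ≤ b' - a') ∧
        b - a < (γ + 1 - Real.sqrt (1 - α)) - (-γ - 1 + Real.sqrt (1 - α))) ∧
    ((1 - α) / 2 ≤ γ ^ 2 →
      ∀ a b : ℝ, a = -γ - 1 + Real.sqrt (2 * (1 - α)) →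
        b = γ + 1 - Real.sqrt (2 * (1 - α)) →
        (∀ t ∈ Set.Icc (-γ) γ, α ≤ ∫ x in a..b, p t x) ∧
        (∀ a' b' : ℝ, a' ≤ b' → (∀ t ∈ Set.Icc (-γ) γ, α ≤ ∫ x in a'..b', p t x) →
          b - a ≤ b' - a') ∧
        b - a < (γ + 1 - Real.sqrt (1 - α)) - (-γ - 1 + Real.sqrt (1 - α))) := by
  simp only [hp]
  have hα' : (0:ℝ) < 1 - α := by linarith
  set r := Real.sqrt (1 - α) with hrdef
  have hr2 : r^2 = 1 - α := Real.sq_sqrt (by linarith)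
  have hrnn : 0 ≤ r := Real.sqrt_nonneg _
  constructor
  · -- Case 1 : γ² ≤ (1-α)/2
    intro hcase a b ha hb
    subst ha; subst hb
    set s := Real.sqrt (1 - α - γ ^ 2) with hsdef
    have hs0 : (0:ℝ) ≤ 1 - α - γ ^ 2 := by linarith
    have hs2 : s^2 = 1 - α - γ ^ 2 := Real.sq_sqrt hs0
    have hsnn : 0 ≤ s := Real.sqrt_nonneg _
    have hspos : 0 < s := by
      rw [hsdef]
      exact Real.sqrt_pos.mpr (by linarith)
    have hγs : γ ≤ s := by
      by_contra hc
      push_neg at hc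
      linarith [mul_pos (by linarith : (0:ℝ) < γ - s) (by linarith : (0:ℝ) < γ + s)]
    have hγhalf : γ ≤ 1/2 := by
      by_contra hc
      push_neg at hc
      linarith [mul_pos (by linarith : (0:ℝ) < γ - 1/2) (by linarith : (0:ℝ) < γ + 1/2)]
    have hs1γ : s ≤ 1 - γ := by
      by_contra hc
      push_neg at hc
      linarith [mul_pos (by linarith : (0:ℝ) < s - (1 - γ)) (by linarith : (0:ℝ) < s + (1 - γ)),
        sq_nonneg (γ - 1/2)]
    refine ⟨?_, ?_, ?_⟩
    · -- coverage
      intro t ht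
      obtain ⟨ht1, ht2⟩ := ht
      rw [Gtri_integral]
      have hbt : (0:ℝ) ≤ 1 - s - t := by linarith
      have hat : -1 + s - t ≤ 0 := by linarith
      have h1 := Gtri_right hbt
      have h2 := Gtri_left hat
      have e1 : max 0 (1 - (1 - s - t)) = s + t := by
        rw [max_eq_right (by linarith : (0:ℝ) ≤ 1 - (1 - s - t))]; ring
      have e2 : max 0 (1 + (-1 + s - t)) = s - t := by
        rw [max_eq_right (by linarith : (0:ℝ) ≤ 1 + (-1 + s - t))]; ring
      rw [e1] at h1
      rw [e2] at h2
      linarith [mul_nonneg (by linarith : (0:ℝ) ≤ γ - t) (by linarith : (0:ℝ) ≤ γ + t)]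
    · -- minimality
      intro u v huv hcon
      have hp1 := hcon γ ⟨by linarith, le_rfl⟩
      have hp2 := hcon (-γ) ⟨le_rfl, by linarith⟩
      rw [Gtri_integral] at hp1 hp2
      have hv1 : 0 ≤ v - γ := Gtri_le_half (by linarith [Gtri_nonneg (u - γ)])
      have hu1 : u - γ ≤ 0 := Gtri_half_le (by linarith [Gtri_le_one (v - γ)])
      have hv2 : 0 ≤ v - -γ := Gtri_le_half (by linarith [Gtri_nonneg (u - -γ)])
      have hu2 : u - -γ ≤ 0 := Gtri_half_le (by linarith [Gtri_le_one (v - -γ)])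
      have h1 := Gtri_right hv1
      have h4 := Gtri_left hu1
      have h3 := Gtri_right hv2
      have h2 := Gtri_left hu2
      set M1 := max 0 (1 - (v - γ)) with hM1
      set M2 := max 0 (1 + (u - -γ)) with hM2
      set M3 := max 0 (1 - (v - -γ)) with hM3
      set M4 := max 0 (1 + (u - γ)) with hM4
      have b1 : 1 - (v - γ) ≤ M1 := le_max_right _ _
      have b2 : 1 + (u - -γ) ≤ M2 := le_max_right _ _
      have b3 : 1 - (v - -γ) ≤ M3 := le_max_right _ _
      have b4 : 1 + (u - γ) ≤ M4 := le_max_right _ _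
      have n1 : 0 ≤ M1 := le_max_left _ _
      have n2 : 0 ≤ M2 := le_max_left _ _
      have n3 : 0 ≤ M3 := le_max_left _ _
      have n4 : 0 ≤ M4 := le_max_left _ _
      have hA : M1^2 + M4^2 ≤ 2*(1 - α) := by linarith
      have hB : M2^2 + M3^2 ≤ 2*(1 - α) := by linarith
      by_contra hc
      push_neg at hc
      have h12 : 2*s + 2*γ < M1 + M2 := by linarith
      have h34 : 2*s - 2*γ < M3 + M4 := by linarith
      have hsq1 : (2*s + 2*γ)^2 < (M1 + M2)^2 := by
        have k := mul_pos (by linarith : (0:ℝ) < M1 + M2 - (2*s + 2*γ))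
          (by linarith : (0:ℝ) < M1 + M2 + (2*s + 2*γ))
        linarith [k]
      have hsq2 : (2*s - 2*γ)^2 < (M3 + M4)^2 := by
        have k := mul_pos (by linarith : (0:ℝ) < M3 + M4 - (2*s - 2*γ))
          (by linarith : (0:ℝ) < M3 + M4 + (2*s - 2*γ))
        linarith [k]
      linarith [hsq1, hsq2, sq_nonneg (M1 - M2), sq_nonneg (M3 - M4), hA, hB, hs2]
    · -- strictly shorter than union
      have hlt : r < γ + s := by
        by_contra hc
        push_neg at hc
        linarith [mul_pos hγ hspos, mul_le_mul hc hc (by positivity) hrnn]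
      linarith
  · -- Case 2 : γ² ≥ (1-α)/2
    intro hcase a b ha hb
    subst ha; subst hb
    set s := Real.sqrt (2 * (1 - α)) with hsdef
    have hs2 : s^2 = 2 * (1 - α) := Real.sq_sqrt (by linarith)
    have hsnn : 0 ≤ s := Real.sqrt_nonneg _
    have hspos : 0 < s := by
      rw [hsdef]
      exact Real.sqrt_pos.mpr (by linarith)
    have hs1 : s ≤ 1 := by
      by_contra hc
      push_neg at hc
      linarith [mul_pos (by linarith : (0:ℝ) < s - 1) (by linarith : (0:ℝ) < s + 1)]
    have hs2γ : s ≤ 2*γ := by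
      by_contra hc
      push_neg at hc
      linarith [mul_pos (by linarith : (0:ℝ) < s - 2*γ) (by linarith : (0:ℝ) < s + 2*γ)]
    refine ⟨?_, ?_, ?_⟩
    · -- coverage
      intro t ht
      obtain ⟨ht1, ht2⟩ := ht
      rw [Gtri_integral]
      have hbt : (0:ℝ) ≤ γ + 1 - s - t := by linarith
      have hat : -γ - 1 + s - t ≤ 0 := by linarith
      have h1 := Gtri_right hbt
      have h2 := Gtri_left hat
      rcases le_or_gt (s + t - γ) 0 with hX | hX <;> rcases le_or_gt (s - t - γ) 0 with hY | hY
      · have e1 : max 0 (1 - (γ + 1 - s - t)) = 0 := max_eq_left (by linarith)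
        have e2 : max 0 (1 + (-γ - 1 + s - t)) = 0 := max_eq_left (by linarith)
        rw [e1] at h1
        rw [e2] at h2
        linarith
      · have e1 : max 0 (1 - (γ + 1 - s - t)) = 0 := max_eq_left (by linarith)
        have e2 : max 0 (1 + (-γ - 1 + s - t)) = 1 + (-γ - 1 + s - t) :=
          max_eq_right (by linarith)
        rw [e1] at h1
        rw [e2] at h2
        linarith [mul_nonneg (by linarith : (0:ℝ) ≤ γ + t) (by linarith : (0:ℝ) ≤ 2*s - t - γ)]
      · have e1 : max 0 (1 - (γ + 1 - s - t)) = 1 - (γ + 1 - s - t) :=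
          max_eq_right (by linarith)
        have e2 : max 0 (1 + (-γ - 1 + s - t)) = 0 := max_eq_left (by linarith)
        rw [e1] at h1
        rw [e2] at h2
        linarith [mul_nonneg (by linarith : (0:ℝ) ≤ γ - t) (by linarith : (0:ℝ) ≤ 2*s + t - γ)]
      · have e1 : max 0 (1 - (γ + 1 - s - t)) = 1 - (γ + 1 - s - t) :=
          max_eq_right (by linarith)
        have e2 : max 0 (1 + (-γ - 1 + s - t)) = 1 + (-γ - 1 + s - t) :=
          max_eq_right (by linarith)
        rw [e1] at h1
        rw [e2] at h2
        linarith [mul_pos hX hY, mul_nonneg (by linarith : (0:ℝ) ≤ 2*γ - s)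
          (by linarith : (0:ℝ) ≤ 3*s - 2*γ)]
    · -- minimality
      intro u v huv hcon
      have hp1 := hcon γ ⟨by linarith, le_rfl⟩
      have hp2 := hcon (-γ) ⟨le_rfl, by linarith⟩
      rw [Gtri_integral] at hp1 hp2
      have hv1 : 0 ≤ v - γ := Gtri_le_half (by linarith [Gtri_nonneg (u - γ)])
      have hu2 : u - -γ ≤ 0 := Gtri_half_le (by linarith [Gtri_le_one (v - -γ)])
      have h1 := Gtri_right hv1
      have h2 := Gtri_left hu2
      set M1 := max 0 (1 - (v - γ)) with hM1
      set M2 := max 0 (1 + (u - -γ)) with hM2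
      have b1 : 1 - (v - γ) ≤ M1 := le_max_right _ _
      have b2 : 1 + (u - -γ) ≤ M2 := le_max_right _ _
      have n1 : 0 ≤ M1 := le_max_left _ _
      have n2 : 0 ≤ M2 := le_max_left _ _
      have hM1sq : M1^2 ≤ s^2 := by linarith [Gtri_nonneg (u - γ)]
      have hM2sq : M2^2 ≤ s^2 := by linarith [Gtri_le_one (v - -γ)]
      have hM1s : M1 ≤ s := by
        by_contra hcc
        push_neg at hcc
        linarith [mul_pos (by linarith : (0:ℝ) < M1 - s) (by linarith : (0:ℝ) < M1 + s)]
      have hM2s : M2 ≤ s := by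
        by_contra hcc
        push_neg at hcc
        linarith [mul_pos (by linarith : (0:ℝ) < M2 - s) (by linarith : (0:ℝ) < M2 + s)]
      linarith
    · -- strictly shorter than union
      have hlt : r < s := by
        rw [hrdef, hsdef]
        exact Real.sqrt_lt_sqrt (by linarith) (by linarith)
      linarith
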